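/- For all reals a, b > 0 and every real s, one has s·(log a − log b) ≤ √(a·b)·C(s/√(a·b)) + 2·(√a − √b)², where C(s) = 2·s·arsinh(s/2) − 2·√(s² + 4) + 4; moreover equality holds if and only if s = a − b. -/

import Mathlib

/-- The Legendre conjugate of `C*(σ) = 4 cosh(σ/2) - 4`. -/
noncomputable def Cfun (s : ℝ) : ℝ :=
  2 * s * Real.arsinh (s / 2) - 2 * Real.sqrt (s ^ 2 + 4) + 4

noncomputable def hfun (ω ζ s : ℝ) : ℝ :=
  2 * s * Real.arsinh (s / (2 * ω)) - 2 * Real.sqrt (s ^ 2 + 4 * ω ^ 2) - s * ζ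

lemma sqrt_aux (ω : ℝ) (hω : 0 < ω) (s : ℝ) :
    Real.sqrt (1 + (s / (2 * ω)) ^ 2) = Real.sqrt (s ^ 2 + 4 * ω ^ 2) / (2 * ω) := by
  rw [eq_div_iff (by positivity)]
  have : (2 * ω) = Real.sqrt ((2 * ω) ^ 2) := by
    rw [Real.sqrt_sq (by positivity)]
  rw [this, ← Real.sqrt_mul (by positivity)]
  congr 1
  rw [Real.sqrt_sq (by positivity)]
  rw [add_mul, div_pow, div_mul_cancel₀ _ (by positivity)]
  ring

lemma hasDerivAt_hfun (ω ζ : ℝ) (hω : 0 < ω) (s : ℝ) :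
    HasDerivAt (hfun ω ζ) (2 * Real.arsinh (s / (2 * ω)) - ζ) s := by
  have hpos : 0 < s ^ 2 + 4 * ω ^ 2 := by positivity
  have hsq : Real.sqrt (s ^ 2 + 4 * ω ^ 2) ≠ 0 := by positivity
  have h1 : HasDerivAt (fun x : ℝ => x / (2 * ω)) (1 / (2 * ω)) s := by
    simpa using (hasDerivAt_id s).div_const (2 * ω)
  have h2 : HasDerivAt (fun x : ℝ => Real.arsinh (x / (2 * ω)))
      ((Real.sqrt (1 + (s / (2 * ω)) ^ 2))⁻¹ * (1 / (2 * ω))) s :=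
    (Real.hasDerivAt_arsinh _).comp s h1
  have h2' : (Real.sqrt (1 + (s / (2 * ω)) ^ 2))⁻¹ * (1 / (2 * ω))
      = (Real.sqrt (s ^ 2 + 4 * ω ^ 2))⁻¹ := by
    rw [sqrt_aux ω hω s]
    field_simp
  rw [h2'] at h2
  have h3 : HasDerivAt (fun x : ℝ => 2 * x * Real.arsinh (x / (2 * ω)))
      (2 * Real.arsinh (s / (2 * ω)) + 2 * s * (Real.sqrt (s ^ 2 + 4 * ω ^ 2))⁻¹) s := by
    have := ((hasDerivAt_id s).const_mul 2).mul h2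
    exact this.congr_deriv (by simp only [id_eq]; ring)
  have h4 : HasDerivAt (fun x : ℝ => x ^ 2 + 4 * ω ^ 2) (2 * s) s := by
    simpa using (hasDerivAt_pow 2 s).add_const (4 * ω ^ 2)
  have h5 : HasDerivAt (fun x : ℝ => Real.sqrt (x ^ 2 + 4 * ω ^ 2))
      (1 / (2 * Real.sqrt (s ^ 2 + 4 * ω ^ 2)) * (2 * s)) s :=
    (Real.hasDerivAt_sqrt (ne_of_gt hpos)).comp s h4
  have h6 : HasDerivAt (fun x : ℝ => x * ζ) ζ s := by
    simpa using (hasDerivAt_id s).mul_const ζ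
  have := (h3.sub (h5.const_mul 2)).sub h6
  exact this.congr_deriv (by ring)

lemma hfun_cont (ω ζ : ℝ) (hω : 0 < ω) : Continuous (hfun ω ζ) := by
  have : ∀ s, ContinuousAt (hfun ω ζ) s := fun s =>
    (hasDerivAt_hfun ω ζ hω s).continuousAt
  exact continuous_iff_continuousAt.mpr this

lemma hfun_min (ω ζ : ℝ) (hω : 0 < ω) (s : ℝ) :
    hfun ω ζ (2 * ω * Real.sinh (ζ / 2)) ≤ hfun ω ζ s ∧
      (hfun ω ζ (2 * ω * Real.sinh (ζ / 2)) = hfun ω ζ s ↔ s = 2 * ω * Real.sinh (ζ / 2)) := by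
  set c := 2 * ω * Real.sinh (ζ / 2) with hc
  have hderiv : ∀ x, deriv (hfun ω ζ) x = 2 * Real.arsinh (x / (2 * ω)) - ζ :=
    fun x => (hasDerivAt_hfun ω ζ hω x).deriv
  have hcω : c / (2 * ω) = Real.sinh (ζ / 2) := by
    rw [hc, mul_div_cancel_left₀ _ (by positivity)]
  have hmono : StrictMonoOn (hfun ω ζ) (Set.Ici c) := by
    apply strictMonoOn_of_deriv_pos (convex_Ici c) (hfun_cont ω ζ hω).continuousOn
    intro x hx
    rw [interior_Ici] at hx
    rw [hderiv, sub_pos]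
    have : Real.arsinh (Real.sinh (ζ / 2)) < Real.arsinh (x / (2 * ω)) := by
      rw [Real.arsinh_lt_arsinh, ← hcω]
      gcongr
      exact hx
    rw [Real.arsinh_sinh] at this
    linarith
  have hanti : StrictAntiOn (hfun ω ζ) (Set.Iic c) := by
    apply strictAntiOn_of_deriv_neg (convex_Iic c) (hfun_cont ω ζ hω).continuousOn
    intro x hx
    rw [interior_Iic] at hx
    rw [hderiv, sub_neg]
    have : Real.arsinh (x / (2 * ω)) < Real.arsinh (Real.sinh (ζ / 2)) := by
      rw [Real.arsinh_lt_arsinh, ← hcω]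
      gcongr
      exact hx
    rw [Real.arsinh_sinh] at this
    linarith
  have key : ∀ x, x ≠ c → hfun ω ζ c < hfun ω ζ x := by
    intro x hx
    rcases lt_or_gt_of_ne hx with h | h
    · exact hanti (Set.mem_Iic.mpr (le_of_lt h)) (Set.mem_Iic.mpr le_rfl) h
    · exact hmono (Set.mem_Ici.mpr le_rfl) (Set.mem_Ici.mpr (le_of_lt h)) h
  constructor
  · by_cases h : s = c
    · rw [h]
    · exact le_of_lt (key s h)
  · constructor
    · intro h
      by_contra hne
      exact absurd h (ne_of_lt (key s hne))
    · intro h; rw [h]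

theorem fenchel_young_reaction (a b s : ℝ) (ha : 0 < a) (hb : 0 < b) :
    s * (Real.log a - Real.log b)
        ≤ Real.sqrt (a * b) * Cfun (s / Real.sqrt (a * b))
            + 2 * (Real.sqrt a - Real.sqrt b) ^ 2 ∧
      (s * (Real.log a - Real.log b)
          = Real.sqrt (a * b) * Cfun (s / Real.sqrt (a * b))
              + 2 * (Real.sqrt a - Real.sqrt b) ^ 2 ↔ s = a - b) := by
  set ω := Real.sqrt (a * b) with hω
  set ζ := Real.log a - Real.log b with hζ
  have hωpos : 0 < ω := Real.sqrt_pos.mpr (by positivity)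
  have hω2 : ω ^ 2 = a * b := Real.sq_sqrt (by positivity)
  have hsa : Real.sqrt a ^ 2 = a := Real.sq_sqrt ha.le
  have hsb : Real.sqrt b ^ 2 = b := Real.sq_sqrt hb.le
  have hab : Real.sqrt a * Real.sqrt b = ω := (Real.sqrt_mul ha.le b).symm
  -- sinh(ζ/2) = (a - b) / (2ω)
  have hsinh : 2 * ω * Real.sinh (ζ / 2) = a - b := by
    have h1 : Real.exp (ζ / 2) = Real.sqrt a / Real.sqrt b := by
      rw [hζ]
      rw [show (Real.log a - Real.log b) / 2 = Real.log a / 2 - Real.log b / 2 by ring]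
      rw [Real.exp_sub]
      congr 1 <;> rw [← Real.log_sqrt (by positivity), Real.exp_log (by positivity)]
    have h2 : Real.exp (-(ζ / 2)) = Real.sqrt b / Real.sqrt a := by
      rw [Real.exp_neg, h1]
      rw [inv_div]
    rw [Real.sinh_eq, h1, h2]
    have hsa0 : Real.sqrt a ≠ 0 := by positivity
    have hsb0 : Real.sqrt b ≠ 0 := by positivity
    field_simp
    nlinarith [hsa, hsb, hab]
  -- Cfun rescaling
  have hCfun : ω * Cfun (s / ω) =
      2 * s * Real.arsinh (s / (2 * ω)) - 2 * Real.sqrt (s ^ 2 + 4 * ω ^ 2) + 4 * ω := by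
    unfold Cfun
    have h1 : s / ω / 2 = s / (2 * ω) := by
      rw [div_div, mul_comm]
    have h2 : ω * Real.sqrt ((s / ω) ^ 2 + 4) = Real.sqrt (s ^ 2 + 4 * ω ^ 2) := by
      have e1 : ((s / ω) ^ 2 + 4 : ℝ) = (s ^ 2 + 4 * ω ^ 2) / ω ^ 2 := by
        field_simp
      rw [e1, Real.sqrt_div (by positivity), Real.sqrt_sq hωpos.le]
      field_simp
    rw [h1, show ω * (2 * (s / ω) * Real.arsinh (s / (2 * ω)) - 2 * Real.sqrt ((s / ω) ^ 2 + 4) + 4)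
        = 2 * s * Real.arsinh (s / (2 * ω)) - 2 * (ω * Real.sqrt ((s / ω) ^ 2 + 4)) + 4 * ω by
      field_simp, h2]
  -- square expansion
  have hsq : 2 * (Real.sqrt a - Real.sqrt b) ^ 2 = 2 * a + 2 * b - 4 * ω := by
    nlinarith [hsa, hsb, hab]
  -- value at minimum
  have hmin := hfun_min ω ζ hωpos s
  rw [hsinh] at hmin
  have hcval : hfun ω ζ (a - b) = -(2 * (a + b)) := by
    unfold hfun
    have h1 : (a - b) / (2 * ω) = Real.sinh (ζ / 2) := by
      rw [← hsinh]; field_simp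
    have h2 : Real.sqrt ((a - b) ^ 2 + 4 * ω ^ 2) = a + b := by
      rw [hω2, show (a - b) ^ 2 + 4 * (a * b) = (a + b) ^ 2 by ring,
        Real.sqrt_sq (by positivity)]
    rw [h1, Real.arsinh_sinh, h2]
    ring
  -- express difference via hfun
  have hdiff : ω * Cfun (s / ω) + 2 * (Real.sqrt a - Real.sqrt b) ^ 2 - s * ζ
      = hfun ω ζ s - hfun ω ζ (a - b) := by
    rw [hCfun, hsq, hcval]
    unfold hfun
    ring
  rw [hcval] at hmin
  constructor
  · linarith [hmin.1]
  · constructor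
    · intro h
      apply hmin.2.mp
      linarith
    · intro h
      have := hmin.2.mpr h
      linarith
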